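/- The integral operator A defined by (Aφ)(t,s,i,y) = ((1−F(T−t+y|i))/(1−F(y|i))) η_i(t,s) + ∫₀^{T−t} e^{−r(i)v} (f(y+v|i)/(1−F(y|i))) Σ_j p_{ij} ∫₀^∞ φ(t+v,x,j,0) α(x;s,i,v) dx dv is a contraction on B with respect to the weighted sup norm ‖·‖: there exists a constant 0 ≤ L < 1, namely L = sup_D ∫₀^{T−t} e^{−r(i)v} (f(y+v|i)/(1−F(y|i))) (1 + s e^{r(i)v})/(1+s) dv, such that ‖Aφ₁ − Aφ₂‖ ≤ L ‖φ₁ − φ₂‖ for all φ₁, φ₂ ∈ B. -/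

import Mathlib

open MeasureTheory Real Set Finset

/-- Standard normal cumulative distribution function. -/
noncomputable def stdNormalCDF (x : ℝ) : ℝ :=
  ∫ u in Set.Iic x, Real.exp (-u ^ 2 / 2) / Real.sqrt (2 * Real.pi)

/-- Black–Scholes price of a European call with rate `r`, volatility `σ`,
strike `K`, maturity `T`, evaluated at time `t` and stock price `s`;
with `η(t,0)=0` and `η(T,s)=(s-K)⁺`. -/
noncomputable def bsPrice (r σ K T t s : ℝ) : ℝ :=
  if s ≤ 0 then 0
  else if t < T then
    s * stdNormalCDF ((Real.log (s / K) + (r + σ ^ 2 / 2) * (T - t)) / (σ * Real.sqrt (T - t)))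
      - K * Real.exp (-r * (T - t)) *
        stdNormalCDF ((Real.log (s / K) + (r + σ ^ 2 / 2) * (T - t)) / (σ * Real.sqrt (T - t))
          - σ * Real.sqrt (T - t))
  else max (s - K) 0

/-- `L(x,s,i,v)` of the lognormal kernel. -/
noncomputable def lnL (r σ x s v : ℝ) : ℝ :=
  (Real.log (x / s) - (r - σ ^ 2 / 2) * v) / (σ * Real.sqrt v)

/-- The lognormal kernel `α(x; s, i, v)`. -/
noncomputable def lnKernel (r σ x s v : ℝ) : ℝ :=
  Real.exp (-(lnL r σ x s v) ^ 2 / 2) / (Real.sqrt (2 * Real.pi) * x * σ * Real.sqrt v)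

/-- The domain `D` (in the variables `(t, s, y)`, the regime being kept separate). -/
def domD (T : ℝ) : Set (ℝ × ℝ × ℝ) :=
  {q | 0 < q.1 ∧ q.1 < T ∧ 0 < q.2.1 ∧ 0 < q.2.2 ∧ q.2.2 < q.1}

/-- The closure of the domain `D`. -/
def domDbar (T : ℝ) : Set (ℝ × ℝ × ℝ) :=
  {q | 0 ≤ q.1 ∧ q.1 ≤ T ∧ 0 ≤ q.2.1 ∧ 0 ≤ q.2.2 ∧ q.2.2 ≤ q.1}

/-- The right hand side of the Volterra integral equation. -/
noncomputable def ieRHS {k : ℕ} (r σ : Fin k → ℝ) (p : Fin k → Fin k → ℝ)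
    (f F : Fin k → ℝ → ℝ) (K T : ℝ) (φ : ℝ → ℝ → Fin k → ℝ → ℝ)
    (t s : ℝ) (i : Fin k) (y : ℝ) : ℝ :=
  (1 - F i (T - t + y)) / (1 - F i y) * bsPrice (r i) (σ i) K T t s
    + ∫ v in Set.Ioo (0 : ℝ) (T - t),
        Real.exp (-(r i) * v) * (f i (y + v) / (1 - F i y)) *
          ∑ j, p i j * ∫ x in Set.Ioi (0 : ℝ), φ (t + v) x j 0 * lnKernel (r i) (σ i) x s v

/-- Continuity on the closure of `D`. -/
def ContOnClosure (T : ℝ) {k : ℕ} (φ : ℝ → ℝ → Fin k → ℝ → ℝ) : Prop :=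
  ∀ i, ContinuousOn (fun q : ℝ × ℝ × ℝ => φ q.1 q.2.1 i q.2.2) (domDbar T)

/-- At most linear growth in the stock variable: `sup_D |φ|/(1+s) < ∞`. -/
def LinGrowth (T : ℝ) {k : ℕ} (φ : ℝ → ℝ → Fin k → ℝ → ℝ) : Prop :=
  ∃ C : ℝ, ∀ t s y : ℝ, (t, s, y) ∈ domD T → ∀ i, |φ t s i y| ≤ C * (1 + s)

/-- `φ` solves the Volterra integral equation together with boundary condition
`φ(t,0,i,y) = 0`. -/
def SolvesIE {k : ℕ} (r σ : Fin k → ℝ) (p : Fin k → Fin k → ℝ)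
    (f F : Fin k → ℝ → ℝ) (K T : ℝ) (φ : ℝ → ℝ → Fin k → ℝ → ℝ) : Prop :=
  (∀ t s y : ℝ, (t, s, y) ∈ domD T → ∀ i,
      φ t s i y = ieRHS r σ p f F K T φ t s i y) ∧
  (∀ t y : ℝ, ∀ i, 0 ≤ t → t ≤ T → 0 ≤ y → y ≤ t → φ t 0 i y = 0)

/-- Membership in the set `B` of non-negative continuous functions on the closure
of `D` vanishing at `s = 0` with finite weighted sup norm. -/
def memB (T : ℝ) {k : ℕ} (φ : ℝ → ℝ → Fin k → ℝ → ℝ) : Prop :=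
  ContOnClosure T φ ∧
  (∀ t s y : ℝ, (t, s, y) ∈ domDbar T → ∀ i, 0 ≤ φ t s i y) ∧
  (∀ t y : ℝ, ∀ i, 0 ≤ t → t ≤ T → 0 ≤ y → y ≤ t → φ t 0 i y = 0) ∧
  LinGrowth T φ

/-- The weighted sup norm over `D`. -/
noncomputable def wnorm (T : ℝ) {k : ℕ} (φ : ℝ → ℝ → Fin k → ℝ → ℝ) : ℝ :=
  sSup {x : ℝ | ∃ t s y : ℝ, ∃ i : Fin k, (t, s, y) ∈ domD T ∧ x = |φ t s i y| / (1 + s)}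

/-- The contraction constant `L`. -/
noncomputable def Lconst {k : ℕ} (r : Fin k → ℝ) (f F : Fin k → ℝ → ℝ) (T : ℝ) : ℝ :=
  sSup {x : ℝ | ∃ t s y : ℝ, ∃ i : Fin k, (t, s, y) ∈ domD T ∧
    x = ∫ v in Set.Ioo (0 : ℝ) (T - t),
      Real.exp (-(r i) * v) * (f i (y + v) / (1 - F i y)) *
        ((1 + s * Real.exp (r i * v)) / (1 + s))}


section Aux

open MeasureTheory Real Set Finset

/-! ### Lognormal kernel moments -/

variable {r σ s v : ℝ}

lemma subst_exp (g : ℝ → ℝ) :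
    ∫ x in Set.Ioi (0:ℝ), g x = ∫ u : ℝ, |Real.exp u| • g (Real.exp u) := by
  rw [← Real.range_exp, ← Set.image_univ,
    MeasureTheory.integral_image_eq_integral_abs_deriv_smul MeasurableSet.univ
      (fun x _ => (Real.hasDerivAt_exp x).hasDerivWithinAt)
      (Real.exp_injective.injOn) g,
    MeasureTheory.setIntegral_univ]

lemma subst_exp_integrable (g : ℝ → ℝ) :
    IntegrableOn g (Set.Ioi (0:ℝ)) ↔ Integrable (fun u => |Real.exp u| • g (Real.exp u)) := by
  rw [← Real.range_exp, ← Set.image_univ,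
    MeasureTheory.integrableOn_image_iff_integrableOn_abs_deriv_smul MeasurableSet.univ
      (fun x _ => (Real.hasDerivAt_exp x).hasDerivWithinAt)
      (Real.exp_injective.injOn) g, integrableOn_univ]

lemma key_eq0 (hσ : 0 < σ) (hs : 0 < s) (hv : 0 < v) (u : ℝ) :
    Real.exp u * lnKernel r σ (Real.exp u) s v
      = ProbabilityTheory.gaussianPDFReal (Real.log s + (r - σ^2/2)*v)
          (⟨(σ * Real.sqrt v)^2, by positivity⟩ : NNReal) u := by
  have hτ : 0 < σ * Real.sqrt v := by positivity
  have h2π : (0:ℝ) < Real.sqrt (2 * Real.pi) := Real.sqrt_pos.2 (by positivity)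
  have heu : (0:ℝ) < Real.exp u := Real.exp_pos u
  unfold ProbabilityTheory.gaussianPDFReal
  simp only [lnKernel, lnL, NNReal.coe_mk, NNReal.toReal]
  rw [Real.log_div (ne_of_gt heu) (ne_of_gt hs), Real.log_exp]
  have h1 : Real.sqrt (2 * Real.pi * (σ * Real.sqrt v)^2)
      = Real.sqrt (2*Real.pi) * (σ * Real.sqrt v) := by
    rw [Real.sqrt_mul (by positivity), Real.sqrt_sq hτ.le]
  rw [h1]
  have h2 : -((u - Real.log s - (r - σ ^ 2 / 2) * v) / (σ * Real.sqrt v)) ^ 2 / 2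
      = -(u - (Real.log s + (r - σ ^ 2 / 2) * v)) ^ 2 / (2 * (σ * Real.sqrt v) ^ 2) := by
    field_simp
    ring
  rw [h2]
  field_simp

lemma key_eq2 (hσ : 0 < σ) (hs : 0 < s) (hv : 0 < v) (u : ℝ) :
    Real.exp u * ProbabilityTheory.gaussianPDFReal (Real.log s + (r - σ^2/2)*v)
          (⟨(σ * Real.sqrt v)^2, by positivity⟩ : NNReal) u
      = (s * Real.exp (r * v)) * ProbabilityTheory.gaussianPDFReal
          (Real.log s + (r - σ^2/2)*v + (σ * Real.sqrt v)^2)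
          (⟨(σ * Real.sqrt v)^2, by positivity⟩ : NNReal) u := by
  have hτ : 0 < σ * Real.sqrt v := by positivity
  have hτ2 : (0:ℝ) < (σ * Real.sqrt v)^2 := by positivity
  unfold ProbabilityTheory.gaussianPDFReal
  simp only [NNReal.coe_mk, NNReal.toReal]
  rw [show s * Real.exp (r*v) = Real.exp (Real.log s + r * v) by
    rw [Real.exp_add, Real.exp_log hs]]
  rw [mul_left_comm, mul_left_comm (Real.exp (Real.log s + r*v)), ← Real.exp_add, ← Real.exp_add]
  congr 1
  have hsv : (σ * Real.sqrt v) ^ 2 = σ^2 * v := by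
    rw [mul_pow, Real.sq_sqrt hv.le]
  rw [hsv]
  have hσv : σ^2 * v ≠ 0 := by positivity
  field_simp
  ring

lemma var_ne (hσ : 0 < σ) (hv : 0 < v) :
    (⟨(σ * Real.sqrt v)^2, by positivity⟩ : NNReal) ≠ 0 := by
  intro h
  have := congrArg (NNReal.toReal) h
  change (σ * Real.sqrt v)^2 = 0 at this
  have hτ : 0 < σ * Real.sqrt v := by
    have : 0 < Real.sqrt v := Real.sqrt_pos.2 hv
    positivity
  nlinarith

lemma lnKernel_intOn (hσ : 0 < σ) (hs : 0 < s) (hv : 0 < v) :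
    IntegrableOn (fun x => lnKernel r σ x s v) (Set.Ioi (0:ℝ)) := by
  rw [subst_exp_integrable]
  have : (fun u => |Real.exp u| • lnKernel r σ (Real.exp u) s v)
      = ProbabilityTheory.gaussianPDFReal (Real.log s + (r - σ^2/2)*v)
          (⟨(σ * Real.sqrt v)^2, by positivity⟩ : NNReal) := by
    funext u
    rw [smul_eq_mul, abs_of_pos (Real.exp_pos u), key_eq0 hσ hs hv]
  rw [this]
  exact ProbabilityTheory.integrable_gaussianPDFReal _ _

lemma lnKernel_integral (hσ : 0 < σ) (hs : 0 < s) (hv : 0 < v) :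
    ∫ x in Set.Ioi (0:ℝ), lnKernel r σ x s v = 1 := by
  rw [subst_exp (fun x => lnKernel r σ x s v)]
  have : (fun u => |Real.exp u| • lnKernel r σ (Real.exp u) s v)
      = ProbabilityTheory.gaussianPDFReal (Real.log s + (r - σ^2/2)*v)
          (⟨(σ * Real.sqrt v)^2, by positivity⟩ : NNReal) := by
    funext u
    rw [smul_eq_mul, abs_of_pos (Real.exp_pos u), key_eq0 hσ hs hv]
  rw [this]
  exact ProbabilityTheory.integral_gaussianPDFReal_eq_one _ (var_ne hσ hv)

lemma lnKernel_mul_eq (hσ : 0 < σ) (hs : 0 < s) (hv : 0 < v) :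
    (fun u => |Real.exp u| • (Real.exp u * lnKernel r σ (Real.exp u) s v))
      = fun u => (s * Real.exp (r * v)) * ProbabilityTheory.gaussianPDFReal
          (Real.log s + (r - σ^2/2)*v + (σ * Real.sqrt v)^2)
          (⟨(σ * Real.sqrt v)^2, by positivity⟩ : NNReal) u := by
  funext u
  rw [smul_eq_mul, abs_of_pos (Real.exp_pos u), key_eq0 hσ hs hv, key_eq2 hσ hs hv]

lemma lnKernel_mul_intOn (hσ : 0 < σ) (hs : 0 < s) (hv : 0 < v) :
    IntegrableOn (fun x => x * lnKernel r σ x s v) (Set.Ioi (0:ℝ)) := by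
  rw [subst_exp_integrable]
  rw [lnKernel_mul_eq hσ hs hv]
  exact (ProbabilityTheory.integrable_gaussianPDFReal _ _).const_mul _

lemma lnKernel_mul_integral (hσ : 0 < σ) (hs : 0 < s) (hv : 0 < v) :
    ∫ x in Set.Ioi (0:ℝ), x * lnKernel r σ x s v = s * Real.exp (r * v) := by
  rw [subst_exp (fun x => x * lnKernel r σ x s v)]
  rw [lnKernel_mul_eq hσ hs hv]
  rw [MeasureTheory.integral_const_mul,
    ProbabilityTheory.integral_gaussianPDFReal_eq_one _ (var_ne hσ hv), mul_one]

/-! ### Bound on integrals against the kernel -/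

lemma lnKernel_nonneg (hσ : 0 < σ) (hv : 0 < v) {x : ℝ} (hx : 0 < x) :
    0 ≤ lnKernel r σ x s v := by
  unfold lnKernel
  have : 0 < Real.sqrt (2 * Real.pi) * x * σ * Real.sqrt v := by
    have h1 : 0 < Real.sqrt (2 * Real.pi) := Real.sqrt_pos.2 (by positivity)
    have h2 : 0 < Real.sqrt v := Real.sqrt_pos.2 hv
    positivity
  positivity

lemma lnKernel_contOn (hσ : 0 < σ) (hs : 0 < s) (hv : 0 < v) :
    ContinuousOn (fun x => lnKernel r σ x s v) (Set.Ioi (0:ℝ)) := by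
  have hlog : ContinuousOn (fun x : ℝ => Real.log (x / s)) (Set.Ioi 0) :=
    Real.continuousOn_log.comp (continuousOn_id.div_const s)
      (fun x hx => by
        simp only [Set.mem_compl_iff, Set.mem_singleton_iff]
        have : (0:ℝ) < x := hx
        positivity)
  have hL : ContinuousOn (fun x => lnL r σ x s v) (Set.Ioi 0) :=
    (hlog.sub continuousOn_const).div_const _
  have hnum : ContinuousOn (fun x => Real.exp (-(lnL r σ x s v) ^ 2 / 2)) (Set.Ioi 0) :=
    Real.continuous_exp.comp_continuousOn (((hL.pow 2).neg).div_const 2)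
  have hden : ContinuousOn (fun x : ℝ => Real.sqrt (2 * Real.pi) * x * σ * Real.sqrt v)
      (Set.Ioi 0) :=
    (((continuous_const.mul continuous_id').mul continuous_const).mul
      continuous_const).continuousOn
  refine hnum.div hden (fun x hx => ?_)
  have hx' : (0:ℝ) < x := hx
  have h1 : 0 < Real.sqrt (2 * Real.pi) := Real.sqrt_pos.2 (by positivity)
  have h2 : 0 < Real.sqrt v := Real.sqrt_pos.2 hv
  positivity

lemma weight_intOn (hσ : 0 < σ) (hs : 0 < s) (hv : 0 < v) (C : ℝ) :
    IntegrableOn (fun x => C * (1 + x) * lnKernel r σ x s v) (Set.Ioi (0:ℝ)) := by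
  have : (fun x => C * (1 + x) * lnKernel r σ x s v)
      = fun x => C * (lnKernel r σ x s v + x * lnKernel r σ x s v) := by
    funext x; ring
  rw [this]
  exact (((lnKernel_intOn hσ hs hv).add (lnKernel_mul_intOn hσ hs hv)).const_mul C)

lemma weight_integral (hσ : 0 < σ) (hs : 0 < s) (hv : 0 < v) (C : ℝ) :
    ∫ x in Set.Ioi (0:ℝ), C * (1 + x) * lnKernel r σ x s v
      = C * (1 + s * Real.exp (r * v)) := by
  have : (fun x => C * (1 + x) * lnKernel r σ x s v)
      = fun x => C * (lnKernel r σ x s v + x * lnKernel r σ x s v) := by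
    funext x; ring
  rw [this, MeasureTheory.integral_const_mul,
    MeasureTheory.integral_add (lnKernel_intOn hσ hs hv) (lnKernel_mul_intOn hσ hs hv),
    lnKernel_integral hσ hs hv, lnKernel_mul_integral hσ hs hv]

lemma inner_bound (hσ : 0 < σ) (hs : 0 < s) (hv : 0 < v) (g : ℝ → ℝ)
    (hg : AEStronglyMeasurable g (volume.restrict (Set.Ioi 0)))
    (C : ℝ) (_hC : 0 ≤ C) (hbd : ∀ x : ℝ, 0 < x → |g x| ≤ C * (1 + x)) :
    IntegrableOn (fun x => g x * lnKernel r σ x s v) (Set.Ioi (0:ℝ)) ∧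
    |∫ x in Set.Ioi (0:ℝ), g x * lnKernel r σ x s v| ≤ C * (1 + s * Real.exp (r * v)) := by
  have hK := lnKernel_contOn (r := r) hσ hs hv
  have hKm : AEStronglyMeasurable (fun x => lnKernel r σ x s v)
      (volume.restrict (Set.Ioi 0)) := hK.aestronglyMeasurable measurableSet_Ioi
  have hptw : ∀ x ∈ Set.Ioi (0:ℝ),
      ‖g x * lnKernel r σ x s v‖ ≤ C * (1 + x) * lnKernel r σ x s v := by
    intro x hx
    have hx' : (0:ℝ) < x := hx
    rw [norm_mul, Real.norm_eq_abs, Real.norm_eq_abs,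
      abs_of_nonneg (lnKernel_nonneg hσ hv hx')]
    exact mul_le_mul_of_nonneg_right (hbd x hx') (lnKernel_nonneg hσ hv hx')
  have hint : IntegrableOn (fun x => g x * lnKernel r σ x s v) (Set.Ioi (0:ℝ)) := by
    refine Integrable.mono' (g := fun x => C * (1 + x) * lnKernel r σ x s v)
      (weight_intOn hσ hs hv C) (hg.mul hKm) ?_
    rw [ae_restrict_iff' measurableSet_Ioi]
    exact ae_of_all _ hptw
  refine ⟨hint, ?_⟩
  rw [← Real.norm_eq_abs]
  calc ‖∫ x in Set.Ioi (0:ℝ), g x * lnKernel r σ x s v‖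
      ≤ ∫ x in Set.Ioi (0:ℝ), ‖g x * lnKernel r σ x s v‖ :=
        norm_integral_le_integral_norm _
    _ ≤ ∫ x in Set.Ioi (0:ℝ), C * (1 + x) * lnKernel r σ x s v := by
        refine setIntegral_mono_on hint.norm (weight_intOn hσ hs hv C) measurableSet_Ioi hptw
    _ = C * (1 + s * Real.exp (r * v)) := weight_integral hσ hs hv C

/-! ### Boundary growth and cumulative distribution facts -/

lemma growth_closure {k : ℕ} {T : ℝ} (φ : ℝ → ℝ → Fin k → ℝ → ℝ)
    (hc : ContOnClosure T φ) {C : ℝ}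
    (hg : ∀ t s y : ℝ, (t, s, y) ∈ domD T → ∀ i, |φ t s i y| ≤ C * (1 + s))
    {t s : ℝ} (ht0 : 0 < t) (htT : t < T) (hs : 0 < s) (i : Fin k) :
    |φ t s i 0| ≤ C * (1 + s) := by
  have hmem : ((t, s, 0) : ℝ × ℝ × ℝ) ∈ domDbar T :=
    ⟨ht0.le, htT.le, hs.le, le_refl _, ht0.le⟩
  have hIoo : Set.Ioo (0:ℝ) t ∈ nhdsWithin (0:ℝ) (Set.Ioi 0) :=
    Ioo_mem_nhdsGT ht0
  have hq : Filter.Tendsto (fun y : ℝ => ((t, s, y) : ℝ × ℝ × ℝ))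
      (nhdsWithin 0 (Set.Ioi 0)) (nhdsWithin ((t, s, 0) : ℝ × ℝ × ℝ) (domDbar T)) := by
    apply tendsto_nhdsWithin_of_tendsto_nhds_of_eventually_within
    · exact (Continuous.tendsto' (by continuity) 0 ((t, s, 0) : ℝ × ℝ × ℝ) rfl).mono_left
        nhdsWithin_le_nhds
    · filter_upwards [hIoo] with y hy
      exact ⟨ht0.le, htT.le, hs.le, hy.1.le, hy.2.le⟩
  have h2 : Filter.Tendsto (fun y => φ t s i y) (nhdsWithin 0 (Set.Ioi 0))
      (nhds (φ t s i 0)) := (hc i (t, s, 0) hmem).tendsto.comp hq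
  refine le_of_tendsto h2.abs ?_
  filter_upwards [hIoo] with y hy
  exact hg t s y ⟨ht0, htT, hs, hy.1, hy.2⟩ i

section Ffacts
variable {f F : ℝ → ℝ}

lemma F_facts (hfc : ContinuousOn f (Set.Ici 0))
    (hFdef : ∀ y, F y = ∫ u in (0:ℝ)..y, f u)
    {a b : ℝ} (ha : 0 ≤ a) (hab : a ≤ b) :
    F b - F a = ∫ u in a..b, f u := by
  have hb : (0:ℝ) ≤ b := le_trans ha hab
  have h1 : IntervalIntegrable f volume 0 a :=
    (hfc.mono (by rw [Set.uIcc_of_le ha]; exact fun x hx => hx.1)).intervalIntegrable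
  have h2 : IntervalIntegrable f volume a b :=
    (hfc.mono (by rw [Set.uIcc_of_le hab]; exact fun x hx => le_trans ha hx.1)).intervalIntegrable
  rw [hFdef, hFdef, ← intervalIntegral.integral_add_adjacent_intervals h1 h2]
  ring

lemma F_mono (hfc : ContinuousOn f (Set.Ici 0)) (hfnn : ∀ y, 0 ≤ y → 0 ≤ f y)
    (hFdef : ∀ y, F y = ∫ u in (0:ℝ)..y, f u)
    {a b : ℝ} (ha : 0 ≤ a) (hab : a ≤ b) : F a ≤ F b := by
  have := F_facts hfc hFdef ha hab
  have hnn : 0 ≤ ∫ u in a..b, f u := by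
    apply intervalIntegral.integral_nonneg hab
    exact fun u hu => hfnn u (le_trans ha hu.1)
  linarith

lemma F_nonneg (hfc : ContinuousOn f (Set.Ici 0)) (hfnn : ∀ y, 0 ≤ y → 0 ≤ f y)
    (hFdef : ∀ y, F y = ∫ u in (0:ℝ)..y, f u) {a : ℝ} (ha : 0 ≤ a) : 0 ≤ F a := by
  have h0 : F 0 = 0 := by rw [hFdef]; simp
  have := F_mono hfc hfnn hFdef (le_refl (0:ℝ)) ha
  linarith

lemma f_shift_integral (hfc : ContinuousOn f (Set.Ici 0))
    (hFdef : ∀ y, F y = ∫ u in (0:ℝ)..y, f u)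
    {y w : ℝ} (hy : 0 ≤ y) (hw : 0 < w) :
    ∫ v in Set.Ioo (0:ℝ) w, f (y + v) = F (y + w) - F y := by
  rw [F_facts hfc hFdef hy (by linarith)]
  have h1 : ∫ u in y..(y + w), f u = ∫ v in (0:ℝ)..w, f (y + v) := by
    rw [intervalIntegral.integral_comp_add_left f y]
    norm_num
  rw [h1, intervalIntegral.integral_of_le hw.le, ← MeasureTheory.integral_Ioc_eq_integral_Ioo]

lemma f_shift_intOn (hfc : ContinuousOn f (Set.Ici 0)) {y w : ℝ} (hy : 0 ≤ y) (_hw : 0 < w) :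
    IntegrableOn (fun v => f (y + v)) (Set.Ioo 0 w) := by
  apply (ContinuousOn.integrableOn_Icc ?_).mono_set Set.Ioo_subset_Icc_self
  apply hfc.comp (continuous_const.add continuous_id').continuousOn
  intro v hv
  simp only [Set.mem_Ici]
  have := hv.1
  show (0:ℝ) ≤ y + v
  linarith

end Ffacts

/-! ### Measurability of the inner integral in the time variable -/

lemma lnKernel_contOn2 {r σ s : ℝ} (hσ : 0 < σ) (hs : 0 < s) :
    ContinuousOn (fun q : ℝ × ℝ => lnKernel r σ q.2 s q.1)
      ((Set.Ioi (0:ℝ)) ×ˢ (Set.Ioi (0:ℝ))) := by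
  set S := (Set.Ioi (0:ℝ)) ×ˢ (Set.Ioi (0:ℝ)) with hS
  have hx : ∀ q : ℝ × ℝ, q ∈ S → (0:ℝ) < q.2 := fun q hq => hq.2
  have hv : ∀ q : ℝ × ℝ, q ∈ S → (0:ℝ) < q.1 := fun q hq => hq.1
  have hlog : ContinuousOn (fun q : ℝ × ℝ => Real.log (q.2 / s)) S := by
    apply Real.continuousOn_log.comp (continuous_snd.div_const s).continuousOn
    intro q hq
    simp only [Set.mem_compl_iff, Set.mem_singleton_iff]
    have := hx q hq
    positivity
  have hsqv : ContinuousOn (fun q : ℝ × ℝ => Real.sqrt q.1) S :=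
    (Real.continuous_sqrt.comp continuous_fst).continuousOn
  have hL : ContinuousOn (fun q : ℝ × ℝ => lnL r σ q.2 s q.1) S := by
    unfold lnL
    apply (hlog.sub (continuousOn_const.mul continuous_fst.continuousOn)).div
      (continuousOn_const.mul hsqv)
    intro q hq
    have h1 : 0 < Real.sqrt q.1 := Real.sqrt_pos.2 (hv q hq)
    show σ * Real.sqrt q.1 ≠ 0
    positivity
  have hnum : ContinuousOn (fun q : ℝ × ℝ =>
      Real.exp (-(lnL r σ q.2 s q.1) ^ 2 / 2)) S :=
    Real.continuous_exp.comp_continuousOn (((hL.pow 2).neg).div_const 2)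
  apply hnum.div
    ((((continuousOn_const.mul continuous_snd.continuousOn).mul continuousOn_const).mul hsqv))
  intro q hq
  have h1 : 0 < Real.sqrt (2 * Real.pi) := Real.sqrt_pos.2 (by positivity)
  have h2 : 0 < Real.sqrt q.1 := Real.sqrt_pos.2 (hv q hq)
  have h3 := hx q hq
  show Real.sqrt (2 * Real.pi) * q.2 * σ * Real.sqrt q.1 ≠ 0
  positivity

lemma g_meas {k : ℕ} {T r σ s t : ℝ} (hσ : 0 < σ) (hs : 0 < s)
    (φ : ℝ → ℝ → Fin k → ℝ → ℝ) (hc : ContOnClosure T φ) (j : Fin k)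
    (ht0 : 0 ≤ t) (_htT : t < T) :
    AEStronglyMeasurable
      (fun v => ∫ x in Set.Ioi (0:ℝ), φ (t + v) x j 0 * lnKernel r σ x s v)
      (volume.restrict (Set.Ioo 0 (T - t))) := by
  have hprod : AEStronglyMeasurable
      (fun q : ℝ × ℝ => φ (t + q.1) q.2 j 0 * lnKernel r σ q.2 s q.1)
      ((volume.restrict (Set.Ioo 0 (T - t))).prod (volume.restrict (Set.Ioi 0))) := by
    rw [Measure.prod_restrict]
    apply ContinuousOn.aestronglyMeasurable ?_ (measurableSet_Ioo.prod measurableSet_Ioi)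
    apply ContinuousOn.mul
    · have hm : ContinuousOn (fun q : ℝ × ℝ => ((t + q.1, q.2, (0:ℝ)) : ℝ × ℝ × ℝ))
          ((Set.Ioo 0 (T - t)) ×ˢ (Set.Ioi 0)) := by fun_prop
      apply (hc j).comp hm
      intro q hq
      constructor
      · have := hq.1.1; simp only; linarith
      constructor
      · have := hq.1.2; simp only; linarith
      exact ⟨le_of_lt hq.2, le_refl _, by have := hq.1.1; simp only; linarith⟩
    · exact (lnKernel_contOn2 hσ hs).mono
        (Set.prod_mono (fun v hv => hv.1) (le_refl _))
  exact hprod.integral_prod_right'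

lemma slice_meas {k : ℕ} {T : ℝ} (φ : ℝ → ℝ → Fin k → ℝ → ℝ)
    (hc : ContOnClosure T φ) (j : Fin k) {t' : ℝ} (h0 : 0 ≤ t') (hT : t' ≤ T) :
    AEStronglyMeasurable (fun x => φ t' x j 0) (volume.restrict (Set.Ioi 0)) := by
  apply ContinuousOn.aestronglyMeasurable ?_ measurableSet_Ioi
  have hm : ContinuousOn (fun x : ℝ => ((t', x, (0:ℝ)) : ℝ × ℝ × ℝ)) (Set.Ioi 0) := by
    fun_prop
  exact (hc j).comp hm (fun x hx => ⟨h0, hT, le_of_lt hx, le_refl _, h0⟩)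

lemma inner_est {k : ℕ} {T ri σi : ℝ} (hσi : 0 < σi)
    (φ : ℝ → ℝ → Fin k → ℝ → ℝ) (hc : ContOnClosure T φ) {C : ℝ} (hC : 0 ≤ C)
    (hgr : ∀ t s y : ℝ, (t, s, y) ∈ domD T → ∀ i, |φ t s i y| ≤ C * (1 + s))
    (j : Fin k) {t v s : ℝ} (ht0 : 0 < t + v) (hvT : t + v < T) (hv0 : 0 < v) (hs0 : 0 < s) :
    IntegrableOn (fun x => φ (t + v) x j 0 * lnKernel ri σi x s v) (Set.Ioi (0:ℝ)) ∧
    |∫ x in Set.Ioi (0:ℝ), φ (t + v) x j 0 * lnKernel ri σi x s v|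
      ≤ C * (1 + s * Real.exp (ri * v)) :=
  inner_bound hσi hs0 hv0 _ (slice_meas φ hc j ht0.le hvT.le) C hC
    (fun x hx => growth_closure φ hc hgr ht0 hvT hx j)

/-! ### Integrability of the contraction-constant integrand -/

lemma E_intOn {rr s y w c : ℝ} {f : ℝ → ℝ} (hfc : ContinuousOn f (Set.Ici 0))
    (hy : 0 ≤ y) :
    IntegrableOn (fun v => Real.exp (-rr * v) * (f (y + v) / c) *
      ((1 + s * Real.exp (rr * v)) / (1 + s))) (Set.Ioo 0 w) := by
  apply (ContinuousOn.integrableOn_Icc ?_).mono_set Set.Ioo_subset_Icc_self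
  apply ContinuousOn.mul
  apply ContinuousOn.mul
  · exact (Real.continuous_exp.comp (continuous_const.mul continuous_id')).continuousOn
  · apply ContinuousOn.div_const
    apply hfc.comp (continuous_const.add continuous_id').continuousOn
    intro v hv
    simp only [Set.mem_Ici]
    have := hv.1
    show (0:ℝ) ≤ y + v
    linarith
  · exact ((continuous_const.add (continuous_const.mul (Real.continuous_exp.comp
      (continuous_const.mul continuous_id')))).div_const _).continuousOn

lemma alg1 {N s A q E : ℝ} (h : 1 + s ≠ 0) :
    (N * (1 + s)) * (A * q * (E / (1 + s))) = A * q * (N * E) := by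
  field_simp

end Aux

/-- The integral operator `A` is a contraction on `B` for the weighted sup norm,
with contraction constant `L = sup_D ∫₀^{T-t} e^{-r(i)v} (f(y+v|i)/(1-F(y|i)))
(1+s e^{r(i)v})/(1+s) dv < 1`. -/
theorem operator_A_contraction
    (k : ℕ) (hk : 1 ≤ k) (T K : ℝ) (hT : 0 < T) (hK : 0 < K)
    (r σ : Fin k → ℝ) (hr : ∀ i, 0 ≤ r i) (hσ : ∀ i, 0 < σ i)
    (p : Fin k → Fin k → ℝ) (hp0 : ∀ i j, 0 ≤ p i j)
    (hp1 : ∀ i, ∑ j, p i j = 1) (hpd : ∀ i, p i i = 0)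
    (f : Fin k → ℝ → ℝ)
    (hfC1 : ∀ i, ContDiffOn ℝ 1 (f i) (Set.Ici 0))
    (hfbd : ∀ i, ∃ M : ℝ, ∀ y, 0 ≤ y → f i y ≤ M)
    (hfpos : ∀ i y, 0 < y → 0 < f i y)
    (hfnn : ∀ i y, 0 ≤ y → 0 ≤ f i y)
    (hfdens : ∀ i, ∫ u in Set.Ioi (0 : ℝ), f i u = 1)
    (F : Fin k → ℝ → ℝ) (hFdef : ∀ i y, F i y = ∫ u in (0 : ℝ)..y, f i u)
    (hFlt : ∀ i y, 0 ≤ y → F i y < 1) :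
    0 ≤ Lconst r f F T ∧ Lconst r f F T < 1 ∧
    ∀ φ₁ φ₂ : ℝ → ℝ → Fin k → ℝ → ℝ, memB T φ₁ → memB T φ₂ →
      wnorm T (fun t s i y =>
          ieRHS r σ p f F K T φ₁ t s i y - ieRHS r σ p f F K T φ₂ t s i y)
        ≤ Lconst r f F T * wnorm T (fun t s i y => φ₁ t s i y - φ₂ t s i y) := by
  have hkne : Nonempty (Fin k) := ⟨⟨0, hk⟩⟩
  have hfc : ∀ i, ContinuousOn (f i) (Set.Ici 0) := fun i => (hfC1 i).continuousOn
  have hLdef : Lconst r f F T = sSup {x : ℝ | ∃ t s y : ℝ, ∃ i : Fin k, (t, s, y) ∈ domD T ∧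
      x = ∫ v in Set.Ioo (0 : ℝ) (T - t),
        Real.exp (-(r i) * v) * (f i (y + v) / (1 - F i y)) *
          ((1 + s * Real.exp (r i * v)) / (1 + s))} := rfl
  set SL := {x : ℝ | ∃ t s y : ℝ, ∃ i : Fin k, (t, s, y) ∈ domD T ∧
      x = ∫ v in Set.Ioo (0 : ℝ) (T - t),
        Real.exp (-(r i) * v) * (f i (y + v) / (1 - F i y)) *
          ((1 + s * Real.exp (r i * v)) / (1 + s))} with hSLdef
  set c : ℝ := Finset.univ.sup' Finset.univ_nonempty (fun i : Fin k => F i T) with hcdef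
  have helt : ∀ x ∈ SL, 0 ≤ x ∧ x ≤ c := by
    rintro x ⟨t, s, y, i, hm, rfl⟩
    obtain ⟨ht0, htT, hs0, hy0, hyt⟩ : 0 < t ∧ t < T ∧ 0 < s ∧ 0 < y ∧ y < t := hm
    have hw : 0 < T - t := by linarith
    have h1s : (0:ℝ) < 1 + s := by linarith
    have h1F : 0 < 1 - F i y := by linarith [hFlt i y hy0.le]
    constructor
    · apply setIntegral_nonneg measurableSet_Ioo
      intro v hv
      have hfv : 0 ≤ f i (y + v) := hfnn i _ (by linarith [hv.1])
      apply mul_nonneg (mul_nonneg (Real.exp_pos _).le (div_nonneg hfv h1F.le))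
      apply div_nonneg _ h1s.le
      nlinarith [Real.exp_pos (r i * v), hs0]
    · calc (∫ v in Set.Ioo (0:ℝ) (T - t),
            Real.exp (-(r i) * v) * (f i (y + v) / (1 - F i y)) *
              ((1 + s * Real.exp (r i * v)) / (1 + s)))
          ≤ ∫ v in Set.Ioo (0:ℝ) (T - t), f i (y + v) / (1 - F i y) := by
            apply setIntegral_mono_on (E_intOn (hfc i) hy0.le)
              ((f_shift_intOn (hfc i) hy0.le hw).div_const _) measurableSet_Ioo
            intro v hv
            have hfv : 0 ≤ f i (y + v) / (1 - F i y) :=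
              div_nonneg (hfnn i _ (by linarith [hv.1])) h1F.le
            have hA1 : Real.exp (-(r i) * v) ≤ 1 :=
              Real.exp_le_one_iff.2 (by nlinarith [mul_nonneg (hr i) hv.1.le])
            have hAe : Real.exp (-(r i) * v) * Real.exp (r i * v) = 1 := by
              rw [← Real.exp_add, neg_mul, neg_add_cancel, Real.exp_zero]
            calc Real.exp (-(r i) * v) * (f i (y + v) / (1 - F i y)) *
                  ((1 + s * Real.exp (r i * v)) / (1 + s))
                = (f i (y + v) / (1 - F i y)) *
                    ((Real.exp (-(r i) * v) * (1 + s * Real.exp (r i * v))) / (1 + s)) := by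
                  ring
              _ = (f i (y + v) / (1 - F i y)) * ((Real.exp (-(r i) * v) + s) / (1 + s)) := by
                  rw [show Real.exp (-(r i) * v) * (1 + s * Real.exp (r i * v))
                    = Real.exp (-(r i) * v) + s from by linear_combination s * hAe]
              _ ≤ (f i (y + v) / (1 - F i y)) * 1 := by
                  apply mul_le_mul_of_nonneg_left _ hfv
                  rw [div_le_one h1s]
                  linarith
              _ = f i (y + v) / (1 - F i y) := mul_one _
        _ = (F i (y + (T - t)) - F i y) / (1 - F i y) := by
            rw [MeasureTheory.integral_div, f_shift_integral (hfc i) (hFdef i) hy0.le hw]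
        _ ≤ F i T := by
            rw [div_le_iff₀ h1F]
            have hab := F_mono (hfc i) (fun u hu => hfnn i u hu) (hFdef i)
              (show (0:ℝ) ≤ y + (T - t) by linarith)
              (show y + (T - t) ≤ T by linarith)
            have ha0 := F_nonneg (hfc i) (fun u hu => hfnn i u hu) (hFdef i) hy0.le
            have hT1 := hFlt i T hT.le
            nlinarith [mul_nonneg ha0 (sub_nonneg.2 hT1.le)]
        _ ≤ c := Finset.le_sup' (fun i : Fin k => F i T) (Finset.mem_univ i)
  have hSne : SL.Nonempty :=
    ⟨_, T/2, 1, T/4, ⟨0, hk⟩,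
      ⟨by linarith, by linarith, one_pos, by linarith, by linarith⟩, rfl⟩
  have hc1 : c < 1 := by
    rw [hcdef, Finset.sup'_lt_iff]
    exact fun i _ => hFlt i T hT.le
  have hSbdd : BddAbove SL := ⟨c, fun x hx => (helt x hx).2⟩
  have hL0 : 0 ≤ Lconst r f F T := by
    rw [hLdef]; exact Real.sSup_nonneg (fun x hx => (helt x hx).1)
  have hL1 : Lconst r f F T < 1 := by
    rw [hLdef]; exact lt_of_le_of_lt (csSup_le hSne (fun x hx => (helt x hx).2)) hc1
  refine ⟨hL0, hL1, ?_⟩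
  intro φ₁ φ₂ hφ₁ hφ₂
  obtain ⟨hc₁, -, -, C₁, hC₁⟩ := hφ₁
  obtain ⟨hc₂, -, -, C₂, hC₂⟩ := hφ₂
  set N := wnorm T (fun t s i y => φ₁ t s i y - φ₂ t s i y) with hNdef
  have hNs : N = sSup {x : ℝ | ∃ t s y : ℝ, ∃ i : Fin k, (t, s, y) ∈ domD T ∧
      x = |φ₁ t s i y - φ₂ t s i y| / (1 + s)} := hNdef.trans rfl
  have hWb : BddAbove {x : ℝ | ∃ t s y : ℝ, ∃ i : Fin k, (t, s, y) ∈ domD T ∧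
      x = |φ₁ t s i y - φ₂ t s i y| / (1 + s)} := by
    refine ⟨max C₁ 0 + max C₂ 0, ?_⟩
    rintro x ⟨t, s, y, i, hm, rfl⟩
    have hs0 : 0 < s := hm.2.2.1
    have h1s : (0:ℝ) < 1 + s := by linarith
    rw [div_le_iff₀ h1s]
    calc |φ₁ t s i y - φ₂ t s i y| ≤ |φ₁ t s i y| + |φ₂ t s i y| := abs_sub _ _
      _ ≤ C₁ * (1 + s) + C₂ * (1 + s) := add_le_add (hC₁ t s y hm i) (hC₂ t s y hm i)
      _ ≤ (max C₁ 0 + max C₂ 0) * (1 + s) := by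
          nlinarith [le_max_left C₁ (0:ℝ), le_max_left C₂ (0:ℝ)]
  have hN0 : 0 ≤ N := by
    rw [hNs]
    apply Real.sSup_nonneg
    rintro x ⟨t, s, y, i, hm, rfl⟩
    have hs0 : 0 < s := hm.2.2.1
    positivity
  have hNgr : ∀ t s y : ℝ, (t, s, y) ∈ domD T → ∀ i,
      |φ₁ t s i y - φ₂ t s i y| ≤ N * (1 + s) := by
    intro t s y hm i
    have hs0 : 0 < s := hm.2.2.1
    have h1s : (0:ℝ) < 1 + s := by linarith
    have hle : |φ₁ t s i y - φ₂ t s i y| / (1 + s) ≤ N := by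
      rw [hNs]
      exact le_csSup hWb ⟨t, s, y, i, hm, rfl⟩
    calc |φ₁ t s i y - φ₂ t s i y|
        = |φ₁ t s i y - φ₂ t s i y| / (1 + s) * (1 + s) := by field_simp
      _ ≤ N * (1 + s) := mul_le_mul_of_nonneg_right hle h1s.le
  have hcψ : ContOnClosure T (fun t s i y => φ₁ t s i y - φ₂ t s i y) :=
    fun i => (hc₁ i).sub (hc₂ i)
  have hC₁'g : ∀ t s y : ℝ, (t, s, y) ∈ domD T → ∀ i,
      |φ₁ t s i y| ≤ max C₁ 0 * (1 + s) := fun t s y hm i =>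
    le_trans (hC₁ t s y hm i) (mul_le_mul_of_nonneg_right (le_max_left _ _)
      (by have := hm.2.2.1; linarith))
  have hC₂'g : ∀ t s y : ℝ, (t, s, y) ∈ domD T → ∀ i,
      |φ₂ t s i y| ≤ max C₂ 0 * (1 + s) := fun t s y hm i =>
    le_trans (hC₂ t s y hm i) (mul_le_mul_of_nonneg_right (le_max_left _ _)
      (by have := hm.2.2.1; linarith))
  unfold wnorm
  apply Real.sSup_le _ (mul_nonneg hL0 hN0)
  rintro x ⟨t, s, y, i, hm, rfl⟩
  dsimp only
  obtain ⟨ht0, htT, hs0, hy0, hyt⟩ : 0 < t ∧ t < T ∧ 0 < s ∧ 0 < y ∧ y < t := hm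
  have hw : 0 < T - t := by linarith
  have h1s : (0:ℝ) < 1 + s := by linarith
  have h1F : 0 < 1 - F i y := by linarith [hFlt i y hy0.le]
  obtain ⟨M, hM⟩ := hfbd i
  have hM0 : 0 ≤ M := le_trans (hfnn i 0 le_rfl) (hM 0 le_rfl)
  -- inner estimates
  have hin1 : ∀ v ∈ Set.Ioo (0:ℝ) (T - t), ∀ j : Fin k,
      IntegrableOn (fun x => φ₁ (t + v) x j 0 * lnKernel (r i) (σ i) x s v) (Set.Ioi (0:ℝ)) ∧
      |∫ x in Set.Ioi (0:ℝ), φ₁ (t + v) x j 0 * lnKernel (r i) (σ i) x s v|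
        ≤ max C₁ 0 * (1 + s * Real.exp (r i * v)) := fun v hv j =>
    inner_est (hσ i) φ₁ hc₁ (le_max_right C₁ 0) hC₁'g j (by linarith [hv.1])
      (by linarith [hv.2]) hv.1 hs0
  have hin2 : ∀ v ∈ Set.Ioo (0:ℝ) (T - t), ∀ j : Fin k,
      IntegrableOn (fun x => φ₂ (t + v) x j 0 * lnKernel (r i) (σ i) x s v) (Set.Ioi (0:ℝ)) ∧
      |∫ x in Set.Ioi (0:ℝ), φ₂ (t + v) x j 0 * lnKernel (r i) (σ i) x s v|
        ≤ max C₂ 0 * (1 + s * Real.exp (r i * v)) := fun v hv j =>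
    inner_est (hσ i) φ₂ hc₂ (le_max_right C₂ 0) hC₂'g j (by linarith [hv.1])
      (by linarith [hv.2]) hv.1 hs0
  have hinψ : ∀ v ∈ Set.Ioo (0:ℝ) (T - t), ∀ j : Fin k,
      |(∫ x in Set.Ioi (0:ℝ), φ₁ (t + v) x j 0 * lnKernel (r i) (σ i) x s v)
        - ∫ x in Set.Ioi (0:ℝ), φ₂ (t + v) x j 0 * lnKernel (r i) (σ i) x s v|
      ≤ N * (1 + s * Real.exp (r i * v)) := by
    intro v hv j
    have h := inner_est (ri := r i) (hσ i) (fun t s i y => φ₁ t s i y - φ₂ t s i y) hcψ hN0 hNgr j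
      (show (0:ℝ) < t + v by linarith [hv.1]) (by linarith [hv.2]) hv.1 hs0
    have hsub : (∫ x in Set.Ioi (0:ℝ),
          (φ₁ (t + v) x j 0 - φ₂ (t + v) x j 0) * lnKernel (r i) (σ i) x s v)
        = (∫ x in Set.Ioi (0:ℝ), φ₁ (t + v) x j 0 * lnKernel (r i) (σ i) x s v)
          - ∫ x in Set.Ioi (0:ℝ), φ₂ (t + v) x j 0 * lnKernel (r i) (σ i) x s v := by
      simp only [sub_mul]
      exact MeasureTheory.integral_sub (hin1 v hv j).1 (hin2 v hv j).1
    rw [← hsub]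
    exact h.2
  -- outer integrability
  have hGint : ∀ (φ : ℝ → ℝ → Fin k → ℝ → ℝ), ContOnClosure T φ → ∀ C : ℝ, 0 ≤ C →
      (∀ t' s' y' : ℝ, (t', s', y') ∈ domD T → ∀ i', |φ t' s' i' y'| ≤ C * (1 + s')) →
      IntegrableOn (fun v => Real.exp (-(r i) * v) * (f i (y + v) / (1 - F i y)) *
        ∑ j, p i j * ∫ x in Set.Ioi (0:ℝ), φ (t + v) x j 0 * lnKernel (r i) (σ i) x s v)
        (Set.Ioo 0 (T - t)) := by
    intro φ hcφ C hC hgφ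
    have hmeas : AEStronglyMeasurable
        (fun v => Real.exp (-(r i) * v) * (f i (y + v) / (1 - F i y)) *
          ∑ j, p i j * ∫ x in Set.Ioi (0:ℝ), φ (t + v) x j 0 * lnKernel (r i) (σ i) x s v)
        (volume.restrict (Set.Ioo 0 (T - t))) := by
      apply AEStronglyMeasurable.mul
      apply AEStronglyMeasurable.mul
      · exact (Real.continuous_exp.comp (continuous_const.mul continuous_id')).aestronglyMeasurable
      · apply ContinuousOn.aestronglyMeasurable ?_ measurableSet_Ioo
        apply ContinuousOn.div_const
        apply (hfc i).comp (continuous_const.add continuous_id').continuousOn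
        intro v hv
        simp only [Set.mem_Ici]
        have := hv.1
        show (0:ℝ) ≤ y + v
        linarith
      · exact Finset.aestronglyMeasurable_fun_sum _ (fun j _ =>
          ((g_meas (hσ i) hs0 φ hcφ j ht0.le htT).const_mul (p i j)))
    refine Integrable.mono'
      (g := fun _ => M / (1 - F i y) * (C * (1 + s * Real.exp (r i * T))))
      (integrableOn_const measure_Ioo_lt_top.ne) hmeas ?_
    rw [ae_restrict_iff' measurableSet_Ioo]
    refine ae_of_all _ (fun v hv => ?_)
    have hv0 : (0:ℝ) < v := hv.1
    have hE1 : Real.exp (-(r i) * v) ≤ 1 :=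
      Real.exp_le_one_iff.2 (by nlinarith [mul_nonneg (hr i) hv0.le])
    have hfv : 0 ≤ f i (y + v) := hfnn i _ (by linarith)
    have hfvM : f i (y + v) ≤ M := hM _ (by linarith)
    have hSig : |∑ j, p i j *
        ∫ x in Set.Ioi (0:ℝ), φ (t + v) x j 0 * lnKernel (r i) (σ i) x s v|
        ≤ C * (1 + s * Real.exp (r i * T)) := by
      have hterm : ∀ j : Fin k, |p i j *
          ∫ x in Set.Ioi (0:ℝ), φ (t + v) x j 0 * lnKernel (r i) (σ i) x s v|
          ≤ p i j * (C * (1 + s * Real.exp (r i * T))) := by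
        intro j
        rw [abs_mul, abs_of_nonneg (hp0 i j)]
        apply mul_le_mul_of_nonneg_left _ (hp0 i j)
        have h := (inner_est (ri := r i) (hσ i) φ hcφ hC hgφ j (show (0:ℝ) < t + v by linarith)
          (by linarith [hv.2]) hv0 hs0).2
        refine le_trans h ?_
        have hexp : Real.exp (r i * v) ≤ Real.exp (r i * T) :=
          Real.exp_le_exp.2 (by nlinarith [mul_nonneg (hr i) (show (0:ℝ) ≤ T - v by linarith [hv.2, ht0])])
        nlinarith [mul_nonneg (mul_nonneg hC hs0.le) (sub_nonneg.2 hexp)]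
      calc |∑ j, p i j *
            ∫ x in Set.Ioi (0:ℝ), φ (t + v) x j 0 * lnKernel (r i) (σ i) x s v|
          ≤ ∑ j, |p i j *
            ∫ x in Set.Ioi (0:ℝ), φ (t + v) x j 0 * lnKernel (r i) (σ i) x s v| :=
            Finset.abs_sum_le_sum_abs _ _
        _ ≤ ∑ j : Fin k, p i j * (C * (1 + s * Real.exp (r i * T))) :=
            Finset.sum_le_sum (fun j _ => hterm j)
        _ = C * (1 + s * Real.exp (r i * T)) := by rw [← Finset.sum_mul, hp1 i, one_mul]
    rw [Real.norm_eq_abs, abs_mul, abs_mul]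
    have hE1' : |Real.exp (-(r i) * v)| ≤ 1 := by
      rw [abs_of_pos (Real.exp_pos _)]; exact hE1
    have h2 : |f i (y + v) / (1 - F i y)| ≤ M / (1 - F i y) := by
      rw [abs_of_nonneg (div_nonneg hfv h1F.le)]
      gcongr
    calc |Real.exp (-(r i) * v)| * |f i (y + v) / (1 - F i y)| * |∑ j, p i j *
          ∫ x in Set.Ioi (0:ℝ), φ (t + v) x j 0 * lnKernel (r i) (σ i) x s v|
        ≤ 1 * (M / (1 - F i y)) * (C * (1 + s * Real.exp (r i * T))) := by
          apply mul_le_mul (mul_le_mul hE1' h2 (abs_nonneg _) zero_le_one) hSig (abs_nonneg _)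
          have : 0 ≤ M / (1 - F i y) := div_nonneg hM0 h1F.le
          linarith
      _ = M / (1 - F i y) * (C * (1 + s * Real.exp (r i * T))) := by ring
  have hG1 := hGint φ₁ hc₁ (max C₁ 0) (le_max_right C₁ 0) hC₁'g
  have hG2 := hGint φ₂ hc₂ (max C₂ 0) (le_max_right C₂ 0) hC₂'g
  have hdiff : ieRHS r σ p f F K T φ₁ t s i y - ieRHS r σ p f F K T φ₂ t s i y
      = ∫ v in Set.Ioo (0:ℝ) (T - t),
          (Real.exp (-(r i) * v) * (f i (y + v) / (1 - F i y)) *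
            (∑ j, p i j * ∫ x in Set.Ioi (0:ℝ), φ₁ (t + v) x j 0 * lnKernel (r i) (σ i) x s v)
          - Real.exp (-(r i) * v) * (f i (y + v) / (1 - F i y)) *
            (∑ j, p i j * ∫ x in Set.Ioi (0:ℝ), φ₂ (t + v) x j 0 *
              lnKernel (r i) (σ i) x s v)) := by
    rw [MeasureTheory.integral_sub hG1 hG2]
    simp only [ieRHS]
    ring
  have hH : IntegrableOn (fun v => (N * (1 + s)) *
      (Real.exp (-(r i) * v) * (f i (y + v) / (1 - F i y)) *
        ((1 + s * Real.exp (r i * v)) / (1 + s)))) (Set.Ioo 0 (T - t)) :=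
    (E_intOn (hfc i) hy0.le).const_mul _
  have hpt : ∀ v ∈ Set.Ioo (0:ℝ) (T - t),
      ‖Real.exp (-(r i) * v) * (f i (y + v) / (1 - F i y)) *
          (∑ j, p i j * ∫ x in Set.Ioi (0:ℝ), φ₁ (t + v) x j 0 * lnKernel (r i) (σ i) x s v)
        - Real.exp (-(r i) * v) * (f i (y + v) / (1 - F i y)) *
          (∑ j, p i j * ∫ x in Set.Ioi (0:ℝ), φ₂ (t + v) x j 0 *
            lnKernel (r i) (σ i) x s v)‖
      ≤ (N * (1 + s)) * (Real.exp (-(r i) * v) * (f i (y + v) / (1 - F i y)) *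
          ((1 + s * Real.exp (r i * v)) / (1 + s))) := by
    intro v hv
    have hA0 : 0 ≤ Real.exp (-(r i) * v) := (Real.exp_pos _).le
    have hq0 : 0 ≤ f i (y + v) / (1 - F i y) :=
      div_nonneg (hfnn i _ (by linarith [hv.1])) h1F.le
    have hre : Real.exp (-(r i) * v) * (f i (y + v) / (1 - F i y)) *
          (∑ j, p i j * ∫ x in Set.Ioi (0:ℝ), φ₁ (t + v) x j 0 * lnKernel (r i) (σ i) x s v)
        - Real.exp (-(r i) * v) * (f i (y + v) / (1 - F i y)) *
          (∑ j, p i j * ∫ x in Set.Ioi (0:ℝ), φ₂ (t + v) x j 0 * lnKernel (r i) (σ i) x s v)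
        = Real.exp (-(r i) * v) * (f i (y + v) / (1 - F i y)) *
          (∑ j, p i j * ((∫ x in Set.Ioi (0:ℝ), φ₁ (t + v) x j 0 *
              lnKernel (r i) (σ i) x s v)
            - ∫ x in Set.Ioi (0:ℝ), φ₂ (t + v) x j 0 * lnKernel (r i) (σ i) x s v)) := by
      rw [show (∑ j, p i j * ((∫ x in Set.Ioi (0:ℝ), φ₁ (t + v) x j 0 *
              lnKernel (r i) (σ i) x s v)
            - ∫ x in Set.Ioi (0:ℝ), φ₂ (t + v) x j 0 * lnKernel (r i) (σ i) x s v))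
          = (∑ j, p i j * ∫ x in Set.Ioi (0:ℝ), φ₁ (t + v) x j 0 *
              lnKernel (r i) (σ i) x s v)
            - ∑ j, p i j * ∫ x in Set.Ioi (0:ℝ), φ₂ (t + v) x j 0 *
              lnKernel (r i) (σ i) x s v from by
        rw [← Finset.sum_sub_distrib]
        exact Finset.sum_congr rfl (fun j _ => mul_sub _ _ _)]
      ring
    have hS : |∑ j, p i j * ((∫ x in Set.Ioi (0:ℝ), φ₁ (t + v) x j 0 *
            lnKernel (r i) (σ i) x s v)
          - ∫ x in Set.Ioi (0:ℝ), φ₂ (t + v) x j 0 * lnKernel (r i) (σ i) x s v)|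
        ≤ N * (1 + s * Real.exp (r i * v)) := by
      calc |∑ j, p i j * ((∫ x in Set.Ioi (0:ℝ), φ₁ (t + v) x j 0 *
              lnKernel (r i) (σ i) x s v)
            - ∫ x in Set.Ioi (0:ℝ), φ₂ (t + v) x j 0 * lnKernel (r i) (σ i) x s v)|
          ≤ ∑ j, |p i j * ((∫ x in Set.Ioi (0:ℝ), φ₁ (t + v) x j 0 *
              lnKernel (r i) (σ i) x s v)
            - ∫ x in Set.Ioi (0:ℝ), φ₂ (t + v) x j 0 * lnKernel (r i) (σ i) x s v)| :=
            Finset.abs_sum_le_sum_abs _ _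
        _ ≤ ∑ j : Fin k, p i j * (N * (1 + s * Real.exp (r i * v))) :=
            Finset.sum_le_sum (fun j _ => by
              rw [abs_mul, abs_of_nonneg (hp0 i j)]
              exact mul_le_mul_of_nonneg_left (hinψ v hv j) (hp0 i j))
        _ = N * (1 + s * Real.exp (r i * v)) := by rw [← Finset.sum_mul, hp1 i, one_mul]
    rw [Real.norm_eq_abs, hre, abs_mul, abs_mul, abs_of_nonneg hA0, abs_of_nonneg hq0]
    have hHeq : (N * (1 + s)) * (Real.exp (-(r i) * v) * (f i (y + v) / (1 - F i y)) *
          ((1 + s * Real.exp (r i * v)) / (1 + s)))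
        = Real.exp (-(r i) * v) * (f i (y + v) / (1 - F i y)) *
          (N * (1 + s * Real.exp (r i * v))) := alg1 h1s.ne'
    rw [hHeq, mul_assoc, mul_assoc]
    apply mul_le_mul_of_nonneg_left _ hA0
    exact mul_le_mul_of_nonneg_left hS hq0
  rw [div_le_iff₀ h1s, hdiff]
  calc |∫ v in Set.Ioo (0:ℝ) (T - t),
        (Real.exp (-(r i) * v) * (f i (y + v) / (1 - F i y)) *
          (∑ j, p i j * ∫ x in Set.Ioi (0:ℝ), φ₁ (t + v) x j 0 * lnKernel (r i) (σ i) x s v)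
        - Real.exp (-(r i) * v) * (f i (y + v) / (1 - F i y)) *
          (∑ j, p i j * ∫ x in Set.Ioi (0:ℝ), φ₂ (t + v) x j 0 *
            lnKernel (r i) (σ i) x s v))|
      ≤ ∫ v in Set.Ioo (0:ℝ) (T - t),
        ‖Real.exp (-(r i) * v) * (f i (y + v) / (1 - F i y)) *
          (∑ j, p i j * ∫ x in Set.Ioi (0:ℝ), φ₁ (t + v) x j 0 * lnKernel (r i) (σ i) x s v)
        - Real.exp (-(r i) * v) * (f i (y + v) / (1 - F i y)) *
          (∑ j, p i j * ∫ x in Set.Ioi (0:ℝ), φ₂ (t + v) x j 0 *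
            lnKernel (r i) (σ i) x s v)‖ := by
        rw [← Real.norm_eq_abs]
        exact norm_integral_le_integral_norm _
    _ ≤ ∫ v in Set.Ioo (0:ℝ) (T - t), (N * (1 + s)) *
        (Real.exp (-(r i) * v) * (f i (y + v) / (1 - F i y)) *
          ((1 + s * Real.exp (r i * v)) / (1 + s))) :=
        setIntegral_mono_on (hG1.sub hG2).norm hH measurableSet_Ioo hpt
    _ = (N * (1 + s)) * ∫ v in Set.Ioo (0:ℝ) (T - t),
        Real.exp (-(r i) * v) * (f i (y + v) / (1 - F i y)) *
          ((1 + s * Real.exp (r i * v)) / (1 + s)) := MeasureTheory.integral_const_mul _ _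
    _ ≤ (N * (1 + s)) * Lconst r f F T := by
        apply mul_le_mul_of_nonneg_left _ (mul_nonneg hN0 h1s.le)
        rw [hLdef]
        exact le_csSup hSbdd ⟨t, s, y, i, ⟨ht0, htT, hs0, hy0, hyt⟩, rfl⟩
    _ = Lconst r f F T * N * (1 + s) := by ring
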